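/- Assume a = a(ρ) ∈ (0, 1] and ρ > 0. Let (f(t))_{t≥0} be a weak solution of the spatially homogeneous Boltzmann-type model with initial datum f₀ of total mass ρ, set θ̄₀ := (1/ρ)∫_I |θ − α_d| f₀(dθ) and θ̄(t) := (1/ρ)∫_I |θ − α_d| f(t)(dθ), and define λ := a(1 + 2|α_c|/π) − 1 and μ := a/π. If 0 < θ̄₀ < π(1/a − 1) and |α_c| ≤ (π/2)(1/a − 1) − θ̄₀/2, then for all t ≥ 0 one has θ̄(t) ≤ |λ|θ̄₀ / ((|λ| − μθ̄₀)e^{|λ|ρt} + μθ̄₀). -/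

import Mathlib

open MeasureTheory Real Filter
open scoped Real Topology

/-- The angular collision-probability profile `𝒢(s) = (1/π)·min{s, 2π−s}`. -/
noncomputable def Gfun (s : ℝ) : ℝ := (1 / π) * min s (2 * π - s)

/-- The collision probability `P(θ⁎, φ⁎) = a·𝒢(|θ⁎ − φ⁎|)`. -/
noncomputable def Pcoll (a θ φ : ℝ) : ℝ := a * Gfun |θ - φ|

/-- The post-interaction angle
`𝒞(θ⁎, φ⁎) = θ⁎ + (1 − P(θ⁎, φ⁎))(α_d − θ⁎) + P(θ⁎, φ⁎)·α_c`. -/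
noncomputable def Cpost (a αd αc θ φ : ℝ) : ℝ :=
  θ + (1 - Pcoll a θ φ) * (αd - θ) + Pcoll a θ φ * αc

/-! ### Auxiliary: the periodized distance to `αd` -/

noncomputable def psi (αd x : ℝ) : ℝ := |toIocMod Real.two_pi_pos (-π) (x - αd)|

lemma psi_nonneg (αd x : ℝ) : 0 ≤ psi αd x := abs_nonneg _

lemma psi_le_pi (αd x : ℝ) : psi αd x ≤ π := by
  have h := toIocMod_mem_Ioc Real.two_pi_pos (-π) (x - αd)
  rw [Set.mem_Ioc] at h
  have : -π + 2 * π = π := by ring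
  rw [this] at h
  exact abs_le.2 ⟨le_of_lt h.1, h.2⟩

lemma psi_periodic (αd x : ℝ) : psi αd (x + 2 * π) = psi αd x := by
  unfold psi
  have : x + 2 * π - αd = (x - αd) + 2 * π := by ring
  rw [this, toIocMod_add_right]

lemma psi_eq_on {αd x : ℝ} (hx : x ∈ Set.Ico (-π + αd) (π + αd)) : psi αd x = |x - αd| := by
  rw [Set.mem_Ico] at hx
  rcases eq_or_lt_of_le hx.1 with h | h
  · have hx1 : x - αd = -π := by linarith
    unfold psi
    rw [hx1]
    have h2 : toIocMod Real.two_pi_pos (-π) (-π) = -π + 2 * π := by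
      rw [toIocMod_eq_iff Real.two_pi_pos]
      refine ⟨⟨by linarith [Real.pi_pos], le_refl _⟩, -1, ?_⟩
      rw [neg_one_zsmul]; ring
    rw [h2, abs_of_nonneg (by linarith [Real.pi_pos]), abs_of_nonpos (by linarith [Real.pi_pos])]
    ring
  · unfold psi
    rw [(toIocMod_eq_self Real.two_pi_pos).2 ⟨by linarith, by linarith [hx.2]⟩]

lemma psi_le (αd x : ℝ) : psi αd x ≤ |x - αd| := by
  set y := x - αd with hy
  by_cases h : y ∈ Set.Ioc (-π) (-π + 2 * π)
  · unfold psi; rw [(toIocMod_eq_self Real.two_pi_pos).2 h]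
  · have : π ≤ |y| := by
      rw [Set.mem_Ioc, not_and_or] at h
      push_neg at h
      rcases h with h | h
      · rw [abs_of_nonpos (by linarith [Real.pi_pos])]; linarith
      · rw [abs_of_nonneg (by linarith [Real.pi_pos])]; linarith
    exact le_trans (psi_le_pi αd x) this

lemma psi_measurable (αd : ℝ) : Measurable (psi αd) := by
  have : (fun x => toIocMod Real.two_pi_pos (-π) (x - αd)) =
      fun x => (x - αd) + (⌊(-π + 2 * π - (x - αd)) / (2 * π)⌋ : ℝ) * (2 * π) := by
    funext x
    rw [toIocMod, toIocDiv_eq_neg_floor, zsmul_eq_mul]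
    push_cast
    ring
  unfold psi
  apply Measurable.abs
  rw [this]
  have hfl : Measurable (fun x : ℝ => (⌊(-π + 2 * π - (x - αd)) / (2 * π)⌋ : ℝ)) := by
    exact (measurable_from_top (f := (fun n : ℤ => (n : ℝ)))).comp
      (Int.measurable_floor.comp ((measurable_const.sub (measurable_id.sub measurable_const)).div measurable_const))
  exact (measurable_id.sub measurable_const).add (hfl.mul measurable_const)

/-! ### Auxiliary integration lemmas -/

lemma integrable_of_bdd {ν : Measure ℝ} [IsFiniteMeasure ν] {g : ℝ → ℝ} (hm : Measurable g)
    {C : ℝ} (hC : ∀ x, |g x| ≤ C) : Integrable g ν :=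
  ⟨hm.aestronglyMeasurable, HasFiniteIntegral.of_bounded (C := C) (ae_of_all _ fun x => hC x)⟩

lemma continuous_Cpost (a αd αc : ℝ) : Continuous (fun p : ℝ × ℝ => Cpost a αd αc p.1 p.2) := by
  unfold Cpost Pcoll Gfun
  fun_prop

lemma pointwise_bound {αd αc a : ℝ} (ha : 0 < a) {θ φ : ℝ}
    (hθ : θ ∈ Set.Ico (-π + αd) (π + αd)) (hφ : φ ∈ Set.Ico (-π + αd) (π + αd)) :
    psi αd (Cpost a αd αc θ φ) - psi αd θ ≤
      (a / π) * (psi αd θ + psi αd φ) * (psi αd θ + |αc|) - psi αd θ := by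
  have hπ := Real.pi_pos
  rw [Set.mem_Ico] at hθ hφ
  have hψθ : psi αd θ = |θ - αd| := psi_eq_on (Set.mem_Ico.2 hθ)
  have hψφ : psi αd φ = |φ - αd| := psi_eq_on (Set.mem_Ico.2 hφ)
  set P := Pcoll a θ φ with hPdef
  have hsle : |θ - φ| ≤ |θ - αd| + |φ - αd| := by
    have : θ - φ = (θ - αd) - (φ - αd) := by ring
    rw [this]
    exact abs_sub _ _
  have hs2π : |θ - φ| ≤ 2 * π := by
    rw [abs_le]; constructor <;> linarith [hθ.1, hθ.2, hφ.1, hφ.2]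
  have hP0 : 0 ≤ P := by
    rw [hPdef]; unfold Pcoll Gfun
    have : 0 ≤ min |θ - φ| (2 * π - |θ - φ|) :=
      le_min (abs_nonneg _) (by linarith)
    positivity
  have hPle : P ≤ (a / π) * (|θ - αd| + |φ - αd|) := by
    rw [hPdef]; unfold Pcoll Gfun
    have h1 : min |θ - φ| (2 * π - |θ - φ|) ≤ |θ - φ| := min_le_left _ _
    have : a * ((1 / π) * min |θ - φ| (2 * π - |θ - φ|)) ≤ a * ((1 / π) * (|θ - αd| + |φ - αd|)) := by
      apply mul_le_mul_of_nonneg_left _ ha.le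
      apply mul_le_mul_of_nonneg_left (le_trans h1 hsle) (by positivity)
    calc a * Gfun |θ - φ| = a * ((1 / π) * min |θ - φ| (2 * π - |θ - φ|)) := by unfold Gfun; ring
      _ ≤ a * ((1 / π) * (|θ - αd| + |φ - αd|)) := this
      _ = (a / π) * (|θ - αd| + |φ - αd|) := by ring
  have hCsub : Cpost a αd αc θ φ - αd = P * ((θ - αd) + αc) := by
    rw [hPdef]; unfold Cpost; ring
  have h1 : psi αd (Cpost a αd αc θ φ) ≤ P * (|θ - αd| + |αc|) := by
    calc psi αd (Cpost a αd αc θ φ) ≤ |Cpost a αd αc θ φ - αd| := psi_le _ _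
      _ = P * |(θ - αd) + αc| := by rw [hCsub, abs_mul, abs_of_nonneg hP0]
      _ ≤ P * (|θ - αd| + |αc|) := mul_le_mul_of_nonneg_left (abs_add_le _ _) hP0
  have h2 : P * (|θ - αd| + |αc|) ≤ (a / π) * (|θ - αd| + |φ - αd|) * (|θ - αd| + |αc|) :=
    mul_le_mul_of_nonneg_right hPle (by positivity)
  rw [hψθ, hψφ]
  linarith

/-- The key integral estimate at a fixed time. -/
lemma D_le {αd αc ρ a : ℝ} (hρ : 0 < ρ) (ha : 0 < a) (ν : Measure ℝ)
    (hν : ν Set.univ = ENNReal.ofReal ρ)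
    (hsupp : ν (Set.Ico (-π + αd) (π + αd))ᶜ = 0) :
    ∫ θ, ∫ φ, (psi αd (Cpost a αd αc θ φ) - psi αd θ) ∂ν ∂ν ≤
      ρ * (∫ θ, psi αd θ ∂ν) * (a * (1 + 2 * |αc| / π) - 1)
        + (a / π) * (∫ θ, psi αd θ ∂ν) ^ 2 := by
  have hπ := Real.pi_pos
  haveI : IsFiniteMeasure ν := ⟨by rw [hν]; exact ENNReal.ofReal_lt_top⟩
  have hmass : (ν Set.univ).toReal = ρ := by rw [hν, ENNReal.toReal_ofReal hρ.le]
  have hae : ∀ᵐ x ∂ν, x ∈ Set.Ico (-π + αd) (π + αd) := by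
    have hset : {x : ℝ | ¬ x ∈ Set.Ico (-π + αd) (π + αd)} = (Set.Ico (-π + αd) (π + αd))ᶜ := by
      ext x; simp [Set.mem_compl_iff]
    rw [ae_iff, hset]
    exact hsupp
  set m1 := ∫ θ, psi αd θ ∂ν with hm1
  have hψm := psi_measurable αd
  have hψbd : ∀ x, |psi αd x| ≤ π := fun x => by
    rw [abs_of_nonneg (psi_nonneg αd x)]; exact psi_le_pi αd x
  have hint_psi : Integrable (psi αd) ν := integrable_of_bdd hψm hψbd
  have hint_psi2 : Integrable (fun x => psi αd x ^ 2) ν :=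
    integrable_of_bdd (hψm.pow_const 2) (C := π ^ 2) (fun x => by
      rw [abs_of_nonneg (by positivity), sq, sq]
      exact mul_le_mul (psi_le_pi _ _) (psi_le_pi _ _) (psi_nonneg _ _) hπ.le)
  have m1_nonneg : 0 ≤ m1 := integral_nonneg (fun x => psi_nonneg αd x)
  have m2_le : ∫ θ, psi αd θ ^ 2 ∂ν ≤ π * m1 := by
    rw [hm1, ← integral_const_mul]
    apply integral_mono hint_psi2 (hint_psi.const_mul π)
    intro x
    simp only
    nlinarith [mul_le_mul_of_nonneg_right (psi_le_pi αd x) (psi_nonneg αd x)]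
  -- measurability of the inner integrand in both variables
  have hmC : Measurable (fun p : ℝ × ℝ => psi αd (Cpost a αd αc p.1 p.2) - psi αd p.1) :=
    (hψm.comp (continuous_Cpost a αd αc).measurable).sub (hψm.comp measurable_fst)
  have hinner_int : ∀ θ, Integrable (fun φ => psi αd (Cpost a αd αc θ φ) - psi αd θ) ν := by
    intro θ
    apply integrable_of_bdd
    · exact (hψm.comp ((continuous_Cpost a αd αc).measurable.comp
        (measurable_const.prodMk measurable_id))).sub measurable_const
    · intro x
      calc |psi αd (Cpost a αd αc θ x) - psi αd θ| ≤ |psi αd (Cpost a αd αc θ x)| + |psi αd θ| :=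
            abs_sub _ _
        _ ≤ π + π := add_le_add (hψbd _) (hψbd _)
  have hB_int : ∀ θ, Integrable (fun φ => (a / π) * (psi αd θ + psi αd φ) * (psi αd θ + |αc|)
      - psi αd θ) ν := by
    intro θ
    apply integrable_of_bdd
    · exact ((((measurable_const.add hψm).const_mul _).mul_const _).sub measurable_const)
    · intro x
      have h1 : 0 ≤ (a / π) * (psi αd θ + psi αd x) * (psi αd θ + |αc|) := by
        have := psi_nonneg αd θ
        have := psi_nonneg αd x
        positivity
      have h2 : (a / π) * (psi αd θ + psi αd x) * (psi αd θ + |αc|)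
          ≤ (a / π) * (π + π) * (π + |αc|) := by
        have hap : (0:ℝ) ≤ a / π := by positivity
        apply mul_le_mul (mul_le_mul_of_nonneg_left
          (add_le_add (psi_le_pi αd θ) (psi_le_pi αd x)) hap)
          (add_le_add (psi_le_pi αd θ) le_rfl)
          (add_nonneg (psi_nonneg αd θ) (abs_nonneg αc)) (by positivity)
      calc |(a / π) * (psi αd θ + psi αd x) * (psi αd θ + |αc|) - psi αd θ|
          ≤ |(a / π) * (psi αd θ + psi αd x) * (psi αd θ + |αc|)| + |psi αd θ| := abs_sub _ _
        _ ≤ (a / π) * (π + π) * (π + |αc|) + π := by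
            rw [abs_of_nonneg h1]
            exact add_le_add h2 (hψbd θ)
  -- inner integral bound
  have hBval : ∀ θ, ∫ φ, ((a / π) * (psi αd θ + psi αd φ) * (psi αd θ + |αc|) - psi αd θ) ∂ν
      = ((a / π) * psi αd θ * (psi αd θ + |αc|) - psi αd θ) * ρ
        + (a / π) * (psi αd θ + |αc|) * m1 := by
    intro θ
    have : (fun φ => (a / π) * (psi αd θ + psi αd φ) * (psi αd θ + |αc|) - psi αd θ)
        = fun φ => ((a / π) * psi αd θ * (psi αd θ + |αc|) - psi αd θ)
          + ((a / π) * (psi αd θ + |αc|)) * psi αd φ := by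
      funext φ; ring
    rw [this, integral_add (integrable_const _) (hint_psi.const_mul _), integral_const,
      integral_const_mul, measureReal_def, hmass, smul_eq_mul, hm1]
    ring
  have hinner_le : ∀ᵐ θ ∂ν, (∫ φ, (psi αd (Cpost a αd αc θ φ) - psi αd θ) ∂ν)
      ≤ ((a / π) * psi αd θ * (psi αd θ + |αc|) - psi αd θ) * ρ
        + (a / π) * (psi αd θ + |αc|) * m1 := by
    filter_upwards [hae] with θ hθ
    rw [← hBval θ]
    apply integral_mono_ae (hinner_int θ) (hB_int θ)
    filter_upwards [hae] with φ hφ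
    exact pointwise_bound ha hθ hφ
  -- outer integral
  have houter_int : Integrable (fun θ => ∫ φ, (psi αd (Cpost a αd αc θ φ) - psi αd θ) ∂ν) ν := by
    constructor
    · exact (StronglyMeasurable.integral_prod_right' (hmC.stronglyMeasurable)).aestronglyMeasurable
    · apply HasFiniteIntegral.of_bounded (C := (π + π) * ρ)
      apply ae_of_all
      intro θ
      calc ‖∫ φ, (psi αd (Cpost a αd αc θ φ) - psi αd θ) ∂ν‖
          ≤ (π + π) * (ν Set.univ).toReal := by
            apply norm_integral_le_of_norm_le_const
            apply ae_of_all
            intro x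
            rw [Real.norm_eq_abs]
            calc |psi αd (Cpost a αd αc θ x) - psi αd θ|
                ≤ |psi αd (Cpost a αd αc θ x)| + |psi αd θ| := abs_sub _ _
              _ ≤ π + π := add_le_add (hψbd _) (hψbd _)
        _ = (π + π) * ρ := by rw [hmass]
  have hrhs_int : Integrable (fun θ => ((a / π) * psi αd θ * (psi αd θ + |αc|) - psi αd θ) * ρ
      + (a / π) * (psi αd θ + |αc|) * m1) ν := by
    have h1 : Integrable (fun θ => ((a / π) * psi αd θ * (psi αd θ + |αc|) - psi αd θ) * ρ) ν := by
      have : (fun θ => ((a / π) * psi αd θ * (psi αd θ + |αc|) - psi αd θ) * ρ)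
          = fun θ => ((a / π) * ρ) * psi αd θ ^ 2 + ((a / π) * |αc| * ρ - ρ) * psi αd θ := by
        funext θ; ring
      rw [this]
      exact ((hint_psi2.const_mul _).add (hint_psi.const_mul _))
    have h2 : Integrable (fun θ => (a / π) * (psi αd θ + |αc|) * m1) ν := by
      have : (fun θ => (a / π) * (psi αd θ + |αc|) * m1)
          = fun θ => ((a / π) * m1) * psi αd θ + (a / π) * |αc| * m1 := by
        funext θ; ring
      rw [this]
      exact (hint_psi.const_mul _).add (integrable_const _)
    exact h1.add h2
  have hD_le : ∫ θ, ∫ φ, (psi αd (Cpost a αd αc θ φ) - psi αd θ) ∂ν ∂ν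
      ≤ ∫ θ, (((a / π) * psi αd θ * (psi αd θ + |αc|) - psi αd θ) * ρ
        + (a / π) * (psi αd θ + |αc|) * m1) ∂ν :=
    integral_mono_ae houter_int hrhs_int hinner_le
  have hval : ∫ θ, (((a / π) * psi αd θ * (psi αd θ + |αc|) - psi αd θ) * ρ
      + (a / π) * (psi αd θ + |αc|) * m1) ∂ν
      = ((a / π) * ρ) * (∫ θ, psi αd θ ^ 2 ∂ν) + ((a / π) * |αc| * ρ - ρ + (a / π) * m1) * m1
        + (a / π) * |αc| * m1 * ρ := by
    have : (fun θ => (((a / π) * psi αd θ * (psi αd θ + |αc|) - psi αd θ) * ρ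
        + (a / π) * (psi αd θ + |αc|) * m1))
        = fun θ => ((a / π) * ρ) * psi αd θ ^ 2
          + ((a / π) * |αc| * ρ - ρ + (a / π) * m1) * psi αd θ + (a / π) * |αc| * m1 := by
      funext θ; ring
    have i1 : Integrable (fun θ => a / π * ρ * psi αd θ ^ 2) ν := hint_psi2.const_mul _
    have i2 : Integrable (fun θ => (a / π * |αc| * ρ - ρ + a / π * m1) * psi αd θ) ν :=
      hint_psi.const_mul _
    have i12 : Integrable (fun θ => a / π * ρ * psi αd θ ^ 2
        + (a / π * |αc| * ρ - ρ + a / π * m1) * psi αd θ) ν := i1.add i2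
    rw [this, integral_add i12 (integrable_const _), integral_add i1 i2,
      integral_const_mul, integral_const_mul, integral_const, measureReal_def, hmass, smul_eq_mul, hm1]
    ring
  rw [hval] at hD_le
  have hfinal : ((a / π) * ρ) * (∫ θ, psi αd θ ^ 2 ∂ν)
      + ((a / π) * |αc| * ρ - ρ + (a / π) * m1) * m1 + (a / π) * |αc| * m1 * ρ
      ≤ ρ * m1 * (a * (1 + 2 * |αc| / π) - 1) + (a / π) * m1 ^ 2 := by
    have haρ : 0 ≤ (a / π) * ρ := by positivity
    have h := mul_le_mul_of_nonneg_left m2_le haρ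
    have hexp : ρ * m1 * (a * (1 + 2 * |αc| / π) - 1)
        = (a / π) * ρ * (π * m1) + ((a / π) * |αc| * ρ - ρ) * m1 + (a / π) * |αc| * m1 * ρ := by
      field_simp
      ring
    nlinarith [h]
  linarith

/-- Barrier comparison lemma. -/
lemma barrier_lt {F G : ℝ → ℝ} {t : ℝ} (ht : 0 ≤ t)
    (hFc : ∀ s, 0 ≤ s → ContinuousAt F s) (hGc : Continuous G)
    (h0 : F 0 < G 0)
    (key : ∀ τ, 0 < τ → τ ≤ t → F τ = G τ →
      ∃ F' G', HasDerivAt F F' τ ∧ HasDerivAt G G' τ ∧ F' < G') :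
    F t < G t := by
  by_contra hcon
  push_neg at hcon
  set S : Set ℝ := Set.Icc 0 t ∩ {s | G s ≤ F s} with hS
  have hFcont : ContinuousOn F (Set.Icc 0 t) := fun s hs => (hFc s hs.1).continuousWithinAt
  have hSclosed : IsClosed S := by
    have : S = Set.Icc 0 t ∩ (fun s => F s - G s) ⁻¹' Set.Ici 0 := by
      ext s; simp [hS, sub_nonneg]
    rw [this]
    exact ContinuousOn.preimage_isClosed_of_isClosed
      (hFcont.sub hGc.continuousOn) isClosed_Icc isClosed_Ici
  have hSne : S.Nonempty := ⟨t, ⟨ht, le_refl t⟩, hcon⟩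
  have hSbdd : BddBelow S := ⟨0, fun s hs => hs.1.1⟩
  set τ := sInf S with hτ
  have hτS : τ ∈ S := hSclosed.csInf_mem hSne hSbdd
  have hτ0 : 0 ≤ τ := hτS.1.1
  have hτt : τ ≤ t := hτS.1.2
  have hτpos : 0 < τ := by
    rcases eq_or_lt_of_le hτ0 with h | h
    · exact absurd hτS.2 (by rw [← h]; exact not_le.2 h0)
    · exact h
  have hbefore : ∀ s, s ∈ Set.Ico (0:ℝ) τ → F s < G s := by
    intro s hs
    by_contra hc
    push_neg at hc
    exact absurd (csInf_le hSbdd ⟨⟨hs.1, le_trans (le_of_lt hs.2) hτt⟩, hc⟩) (not_le.2 hs.2)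
  have hFG : F τ = G τ := by
    refine le_antisymm ?_ hτS.2
    have hlim : Tendsto (fun s => F s - G s) (𝓝[<] τ) (𝓝 (F τ - G τ)) :=
      ((hFc τ hτ0).sub hGc.continuousAt).continuousWithinAt.tendsto
    have hev : ∀ᶠ s in 𝓝[<] τ, F s - G s ≤ 0 := by
      filter_upwards [Ioo_mem_nhdsLT_of_mem (⟨hτpos, le_refl τ⟩ : τ ∈ Set.Ioc 0 τ)] with s hs
      exact le_of_lt (sub_neg.2 (hbefore s ⟨le_of_lt hs.1, hs.2⟩))
    have := le_of_tendsto hlim hev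
    linarith
  obtain ⟨F', G', hF', hG', hlt⟩ := key τ hτpos hτt hFG
  have hD : HasDerivAt (fun s => F s - G s) (F' - G') τ := hF'.sub hG'
  rw [hasDerivAt_iff_tendsto_slope] at hD
  have hD' : Tendsto (slope (fun s => F s - G s) τ) (𝓝[<] τ) (𝓝 (F' - G')) :=
    hD.mono_left (nhdsWithin_mono τ (fun s hs => Set.mem_compl_singleton_iff.2 (ne_of_lt hs)))
  have hev : ∀ᶠ s in 𝓝[<] τ, 0 ≤ slope (fun s => F s - G s) τ s := by
    filter_upwards [Ioo_mem_nhdsLT_of_mem (⟨hτpos, le_refl τ⟩ : τ ∈ Set.Ioc 0 τ)] with s hs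
    have h1 : F s - G s < 0 := sub_neg.2 (hbefore s ⟨le_of_lt hs.1, hs.2⟩)
    have h2 : s - τ < 0 := sub_neg.2 hs.2
    rw [slope_def_field]
    have h3 : F τ - G τ = 0 := by rw [hFG]; ring
    rw [div_nonneg_iff]
    right
    constructor
    · rw [h3]; linarith
    · linarith
  have := ge_of_tendsto hD' hev
  linarith

/-- Derivative of the explicit Riccati solution. -/
lemma riccati_deriv (L mu θ0 ρ : ℝ)
    (hd : ∀ s : ℝ, (L - mu*θ0) * Real.exp (L*ρ*s) + mu*θ0 ≠ 0) (s : ℝ) :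
    HasDerivAt (fun u => L*θ0 / ((L - mu*θ0) * Real.exp (L*ρ*u) + mu*θ0))
      (ρ * (-L * (L*θ0 / ((L - mu*θ0) * Real.exp (L*ρ*s) + mu*θ0))
        + mu * (L*θ0 / ((L - mu*θ0) * Real.exp (L*ρ*s) + mu*θ0))^2)) s := by
  have hE : HasDerivAt (fun u : ℝ => Real.exp (L*ρ*u)) (Real.exp (L*ρ*s) * (L*ρ)) s := by
    have h1 : HasDerivAt (fun u : ℝ => L*ρ*u) (L*ρ) s := by
      simpa using (hasDerivAt_id s).const_mul (L*ρ)
    exact h1.exp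
  have hden' : HasDerivAt (fun u => (L - mu*θ0) * Real.exp (L*ρ*u) + mu*θ0)
      ((L - mu*θ0) * (Real.exp (L*ρ*s) * (L*ρ))) s := (hE.const_mul _).add_const _
  have hgd0 := (hasDerivAt_const s (L*θ0)).div hden' (hd s)
  refine hgd0.congr_deriv ?_
  have hds := hd s
  field_simp
  ring

/-- Quantitative decay estimate for `θ̄(t)` along weak solutions of the spatially
homogeneous Boltzmann-type model: with `λ = a(1 + 2|α_c|/π) − 1` and `μ = a/π`,
`θ̄(t) ≤ |λ|θ̄₀ / ((|λ| − μθ̄₀)e^{|λ|ρt} + μθ̄₀)`. -/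
theorem stmt_2 (αd αc : ℝ) (hαd : αd ∈ Set.Ico (-π) π) (hαc : αc ∈ Set.Ico (-π) π)
    (ρ a : ℝ) (hρ : 0 < ρ) (hρ1 : ρ ≤ 1) (ha : 0 < a) (ha1 : a ≤ 1)
    (f : ℝ → Measure ℝ)
    (hsupp : ∀ t, 0 ≤ t → f t (Set.Ico (-π + αd) (π + αd))ᶜ = 0)
    (hmass : ∀ t, 0 ≤ t → f t Set.univ = ENNReal.ofReal ρ)
    -- weak formulation of the spatially homogeneous Boltzmann-type model:
    (hweak : ∀ ψ : ℝ → ℝ, Measurable ψ → (∃ M, ∀ x, |ψ x| ≤ M) →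
      (∀ x, ψ (x + 2 * π) = ψ x) → ∀ t, 0 ≤ t →
      HasDerivAt (fun s => ∫ θ, ψ θ ∂(f s))
        (∫ θ, ∫ φ, (ψ (Cpost a αd αc θ φ) - ψ θ) ∂(f t) ∂(f t)) t)
    (θbar : ℝ → ℝ) (hθbar : ∀ t, θbar t = (1 / ρ) * ∫ θ, |θ - αd| ∂(f t))
    (θbar0 : ℝ) (hθbar0 : θbar0 = θbar 0)
    (lam mu : ℝ) (hlam : lam = a * (1 + 2 * |αc| / π) - 1) (hmu : mu = a / π)
    (h0 : 0 < θbar0) (h1 : θbar0 < π * (1 / a - 1))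
    (h2 : |αc| ≤ (π / 2) * (1 / a - 1) - θbar0 / 2) :
    ∀ t, 0 ≤ t →
      θbar t ≤ |lam| * θbar0 / ((|lam| - mu * θbar0) * Real.exp (|lam| * ρ * t) + mu * θbar0) := by
  intro t htt
  have hπ := Real.pi_pos
  have hmu_pos : 0 < mu := by rw [hmu]; positivity
  -- `lam ≤ -(mu θbar0) < 0`
  have h2' : 2*a*|αc| ≤ π - a*π - a*θbar0 := by
    have e2a : 2*a*((π/2)*(1/a - 1) - θbar0/2) = π - a*π - a*θbar0 := by
      field_simp
    calc 2*a*|αc| ≤ 2*a*((π/2)*(1/a-1) - θbar0/2) :=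
          mul_le_mul_of_nonneg_left h2 (by positivity)
      _ = π - a*π - a*θbar0 := e2a
  have elam : lam * π = a*π + 2*a*|αc| - π := by rw [hlam]; field_simp
  have emu : mu * π = a := by rw [hmu]; field_simp
  have hlam_le : lam ≤ -(mu * θbar0) := by
    have h3 : lam * π ≤ -(mu*θbar0) * π := by nlinarith [elam, h2', emu]
    exact le_of_mul_le_mul_right h3 hπ
  have hlam_neg : lam < 0 := lt_of_le_of_lt hlam_le (by nlinarith)
  have habs : |lam| = -lam := abs_of_neg hlam_neg
  set L := |lam| with hLdef
  have hL_pos : 0 < L := abs_pos.2 (ne_of_lt hlam_neg)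
  have hLmu : mu * θbar0 ≤ L := by rw [habs]; linarith
  have hmuθ : 0 < mu * θbar0 := mul_pos hmu_pos h0
  have hlamL : lam = -L := by rw [habs]; ring
  -- the comparison function
  have hden_pos : ∀ s : ℝ, 0 < (L - mu*θbar0) * Real.exp (L*ρ*s) + mu*θbar0 := fun s =>
    add_pos_of_nonneg_of_pos (mul_nonneg (by linarith) (Real.exp_pos _).le) hmuθ
  set g : ℝ → ℝ := fun u => L*θbar0 / ((L - mu*θbar0) * Real.exp (L*ρ*u) + mu*θbar0) with hgdef
  have hg_deriv : ∀ s, HasDerivAt g (ρ*(lam * g s + mu * (g s)^2)) s := by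
    intro s
    have hr := riccati_deriv L mu θbar0 ρ (fun s => ne_of_gt (hden_pos s)) s
    rw [hgdef, hlamL]
    exact hr
  have hg_nonneg : ∀ s, 0 ≤ g s := fun s => div_nonneg (by positivity) (hden_pos s).le
  have hg_le : ∀ s, 0 ≤ s → g s ≤ θbar0 := by
    intro s hs
    rw [hgdef]
    have hden_ge : L ≤ (L - mu*θbar0) * Real.exp (L*ρ*s) + mu*θbar0 := by
      nlinarith [Real.one_le_exp (by positivity : (0:ℝ) ≤ L*ρ*s)]
    calc L*θbar0 / ((L - mu*θbar0) * Real.exp (L*ρ*s) + mu*θbar0) ≤ L*θbar0 / L := by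
          gcongr
      _ = θbar0 := by field_simp
  have hg0 : g 0 = θbar0 := by
    rw [hgdef]
    simp only [mul_zero, Real.exp_zero, mul_one]
    rw [show L - mu*θbar0 + mu*θbar0 = L by ring]
    field_simp
  -- the solution functional
  have hψm := psi_measurable αd
  have hψbd : ∀ x, |psi αd x| ≤ π := fun x => by
    rw [abs_of_nonneg (psi_nonneg αd x)]; exact psi_le_pi αd x
  set F : ℝ → ℝ := fun s => (1/ρ) * ∫ θ, psi αd θ ∂(f s) with hFdef
  have hFθ : ∀ s, 0 ≤ s → θbar s = F s := by
    intro s hs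
    rw [hθbar s, hFdef]
    congr 1
    apply integral_congr_ae
    have hae : ∀ᵐ x ∂(f s), x ∈ Set.Ico (-π+αd) (π+αd) := by
      have hset : {x : ℝ | ¬ x ∈ Set.Ico (-π + αd) (π + αd)} = (Set.Ico (-π + αd) (π + αd))ᶜ := by
        ext x; simp [Set.mem_compl_iff]
      rw [ae_iff, hset]
      exact hsupp s hs
    filter_upwards [hae] with x hx
    exact (psi_eq_on hx).symm
  have hF0 : F 0 = θbar0 := by rw [← hFθ 0 le_rfl, ← hθbar0]
  have hFπ : ∀ s, 0 ≤ s → F s ≤ π := by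
    intro s hs
    haveI : IsFiniteMeasure (f s) := ⟨by rw [hmass s hs]; exact ENNReal.ofReal_lt_top⟩
    have hmR : ((f s) Set.univ).toReal = ρ := by
      rw [hmass s hs, ENNReal.toReal_ofReal hρ.le]
    have hint : ∫ θ, psi αd θ ∂(f s) ≤ ρ * π := by
      calc ∫ θ, psi αd θ ∂(f s) ≤ ∫ _θ, π ∂(f s) :=
            integral_mono (integrable_of_bdd hψm hψbd) (integrable_const _)
              (fun x => psi_le_pi αd x)
        _ = ρ * π := by rw [integral_const, measureReal_def, hmR, smul_eq_mul]
    rw [hFdef]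
    calc (1/ρ) * ∫ θ, psi αd θ ∂(f s) ≤ (1/ρ) * (ρ * π) :=
          mul_le_mul_of_nonneg_left hint (by positivity)
      _ = π := by field_simp
  have hF_nonneg : ∀ s, 0 ≤ F s := fun s => by
    rw [hFdef]
    exact mul_nonneg (by positivity) (integral_nonneg (fun x => psi_nonneg αd x))
  have hFderiv : ∀ s, 0 ≤ s → HasDerivAt F
      ((1/ρ) * ∫ θ, ∫ φ, (psi αd (Cpost a αd αc θ φ) - psi αd θ) ∂(f s) ∂(f s)) s := by
    intro s hs
    rw [hFdef]
    exact HasDerivAt.const_mul (1/ρ) (hweak (psi αd) hψm ⟨π, hψbd⟩ (psi_periodic αd) s hs)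
  have hDle : ∀ s, 0 ≤ s →
      (1/ρ) * (∫ θ, ∫ φ, (psi αd (Cpost a αd αc θ φ) - psi αd θ) ∂(f s) ∂(f s))
        ≤ ρ * (lam * F s + mu * (F s)^2) := by
    intro s hs
    have hDL := D_le (αc := αc) hρ ha (f s) (hmass s hs) (hsupp s hs)
    have hm1F : ∫ θ, psi αd θ ∂(f s) = ρ * F s := by rw [hFdef]; field_simp
    rw [hm1F] at hDL
    calc (1/ρ) * (∫ θ, ∫ φ, (psi αd (Cpost a αd αc θ φ) - psi αd θ) ∂(f s) ∂(f s))
        ≤ (1/ρ) * (ρ * (ρ * F s) * (a * (1 + 2 * |αc| / π) - 1) + (a / π) * (ρ * F s)^2) :=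
          mul_le_mul_of_nonneg_left hDL (by positivity)
      _ = ρ * (lam * F s + mu * (F s)^2) := by rw [hlam, hmu]; field_simp
  -- the barrier argument
  set K := 1 + ρ*mu*(π + θbar0) with hKdef
  have hgcont : Continuous g := by
    rw [hgdef]
    have hc1 : Continuous (fun u : ℝ => (L - mu*θbar0) * Real.exp (L*ρ*u) + mu*θbar0) :=
      (continuous_const.mul (Real.continuous_exp.comp (continuous_const.mul continuous_id))).add
        continuous_const
    exact Continuous.div continuous_const hc1 (fun s => ne_of_gt (hden_pos s))
  have hkey : ∀ ε : ℝ, 0 < ε → F t < g t + ε * Real.exp (K*t) := by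
    intro ε hε
    have hGcont : Continuous (fun s => g s + ε * Real.exp (K*s)) :=
      hgcont.add (continuous_const.mul (Real.continuous_exp.comp (continuous_const.mul continuous_id)))
    apply barrier_lt htt (fun s hs => (hFderiv s hs).continuousAt) hGcont
    · rw [hF0, hg0, mul_zero, Real.exp_zero]
      linarith
    · intro τ hτpos hτt hFG
      have hE : HasDerivAt (fun u : ℝ => Real.exp (K*u)) (Real.exp (K*τ) * K) τ := by
        have h1 : HasDerivAt (fun u : ℝ => K*u) K τ := by
          simpa using (hasDerivAt_id τ).const_mul K
        exact h1.exp
      refine ⟨_, _, hFderiv τ hτpos.le,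
        (hg_deriv τ).add (hE.const_mul ε), ?_⟩
      apply lt_of_le_of_lt (hDle τ hτpos.le)
      have hEpos : 0 < Real.exp (K*τ) := Real.exp_pos _
      have hc : 0 < ε * Real.exp (K*τ) := by positivity
      have hsum : 2*(g τ) + ε * Real.exp (K*τ) ≤ π + θbar0 := by
        have hp1 := hFπ τ hτpos.le
        have hp2 := hg_le τ hτpos.le
        rw [hFG] at hp1
        linarith
      rw [hFG]
      have hexpand : ρ * (lam * (g τ + ε * Real.exp (K*τ)) + mu * (g τ + ε * Real.exp (K*τ))^2)
          = ρ * (lam * g τ + mu * (g τ)^2)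
            + (ε * Real.exp (K*τ)) * (ρ*lam + ρ*mu*(2*(g τ) + ε * Real.exp (K*τ))) := by
        ring
      have hlt : ρ*lam + ρ*mu*(2*(g τ) + ε * Real.exp (K*τ)) < K := by
        have t1 : ρ*lam < 0 := mul_neg_of_pos_of_neg hρ hlam_neg
        have t2 : ρ*mu*(2*(g τ) + ε * Real.exp (K*τ)) ≤ ρ*mu*(π + θbar0) :=
          mul_le_mul_of_nonneg_left hsum (mul_nonneg hρ.le hmu_pos.le)
        rw [hKdef]
        linarith
      have hfin := mul_lt_mul_of_pos_left hlt hc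
      have hEK : ε * (Real.exp (K*τ) * K) = (ε * Real.exp (K*τ)) * K := by ring
      rw [hexpand, hEK]
      linarith
  have hgoal : F t ≤ g t := by
    by_contra hcon
    push_neg at hcon
    have hEt : 0 < Real.exp (K*t) := Real.exp_pos _
    have hk := hkey ((F t - g t)/(2*Real.exp (K*t))) (div_pos (by linarith) (by positivity))
    have heq : (F t - g t)/(2*Real.exp (K*t)) * Real.exp (K*t) = (F t - g t)/2 := by
      field_simp
    rw [heq] at hk
    linarith
  calc θbar t = F t := hFθ t htt
    _ ≤ g t := hgoal
    _ = L * θbar0 / ((L - mu * θbar0) * Real.exp (L * ρ * t) + mu * θbar0) := by rw [hgdef]
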